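/- For λ₁, λ₂ ≥ 0 with (λ₁,λ₂) ≠ (0,0) and t > 0: ∫_0^t e^{-s(λ₁+λ₂)} ds = (1 - e^{-t(λ₁+λ₂)})/(λ₁+λ₂). Moreover, for an L²-orthonormal family (e_n) with Qe_n having coefficients ⟨e_{n₁}, Q e_{n₂}⟩, the variance of the Gaussian random variable ⟨f, w(·,t)⟩, where w(x,t) = w(x,0) + drift + σ∫_0^t e^{(t-s)Δ} Q^{1/2} dW_s with Δ the Neumann Laplacian on [0,L], equals σ² Σ_{i} ζ_i ( a₀² ⟨e₀,b_i⟩² t + Σ_{(n₁,n₂)≠(0,0)} a_{n₁}a_{n₂} ((1-e^{-t(λ_{n₁}+λ_{n₂})})/(λ_{n₁}+λ_{n₂})) ⟨e_{n₁},b_i⟩⟨e_{n₂},b_i⟩ ), with a_n = ⟨e_n, f⟩. -/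

import Mathlib

open Real MeasureTheory

lemma base_integral (t l : ℝ) (hl : l ≠ 0) :
    ∫ s in (0:ℝ)..t, Real.exp (-s * l) = (1 - Real.exp (-t * l)) / l := by
  have h := intervalIntegral.integral_comp_mul_right (a := (0:ℝ)) (b := t) (c := -l)
    (f := Real.exp) (neg_ne_zero.mpr hl)
  simp only [zero_mul, integral_exp, smul_eq_mul] at h
  have h2 : ∀ s : ℝ, -s * l = s * -l := by intro s; ring
  simp_rw [h2]
  rw [h, Real.exp_zero, eq_div_iff hl]
  field_simp
  ring

set_option maxHeartbeats 2000000 in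
theorem variance_eigenbasis_expansion
    (L σ t : ℝ) (hL : 0 < L) (hσ : 0 < σ) (ht : 0 < t)
    (m : ℕ) (ζ : Fin (m + 1) → ℝ) (hζ : ∀ i, 0 ≤ ζ i)
    (lam : ℕ → ℝ) (hlam : ∀ n : ℕ, lam n = (n * π / L) ^ 2)
    (a : ℕ → ℝ) (c : ℕ → Fin (m + 1) → ℝ)
    (habs : ∀ i, Summable fun n => |a n * c n i|)
    (hsum : ∀ (i : Fin (m + 1)) (s : ℝ),
      Summable fun n => a n * Real.exp (-s * lam n) * c n i)
    (hsum2 : ∀ i : Fin (m + 1), Summable fun p : ℕ × ℕ =>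
      a p.1 * a p.2 * ((1 - Real.exp (-t * (lam p.1 + lam p.2))) / (lam p.1 + lam p.2))
        * c p.1 i * c p.2 i) :
    (∀ l₁ l₂ : ℝ, 0 ≤ l₁ → 0 ≤ l₂ → (l₁, l₂) ≠ (0, 0) →
      ∫ s in (0:ℝ)..t, Real.exp (-s * (l₁ + l₂))
        = (1 - Real.exp (-t * (l₁ + l₂))) / (l₁ + l₂)) ∧
    σ ^ 2 * ∫ s in (0:ℝ)..t, ∑ i, ζ i * (∑' n : ℕ, a n * Real.exp (-s * lam n) * c n i) ^ 2
      = σ ^ 2 * ∑ i, ζ i * ((a 0) ^ 2 * (c 0 i) ^ 2 * t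
        + ∑' p : ℕ × ℕ, if p ≠ (0, 0) then
            a p.1 * a p.2
              * ((1 - Real.exp (-t * (lam p.1 + lam p.2))) / (lam p.1 + lam p.2))
              * c p.1 i * c p.2 i
          else 0) := by
  classical
  -- basic facts about lam
  have hlam0 : lam 0 = 0 := by simp [hlam 0]
  have hlamnn : ∀ n, 0 ≤ lam n := fun n => by rw [hlam n]; positivity
  have hlampos : ∀ n : ℕ, n ≠ 0 → 0 < lam n := by
    intro n hn
    rw [hlam n]
    have hn' : (n : ℝ) ≠ 0 := Nat.cast_ne_zero.mpr hn
    have : (n : ℝ) * π / L ≠ 0 := by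
      apply div_ne_zero (mul_ne_zero hn' Real.pi_ne_zero) hL.ne'
    positivity
  have part1 : ∀ l₁ l₂ : ℝ, 0 ≤ l₁ → 0 ≤ l₂ → (l₁, l₂) ≠ (0, 0) →
      ∫ s in (0:ℝ)..t, Real.exp (-s * (l₁ + l₂))
        = (1 - Real.exp (-t * (l₁ + l₂))) / (l₁ + l₂) := by
    intro l₁ l₂ h1 h2 hne
    have hl : l₁ + l₂ ≠ 0 := by
      intro h
      have e1 : l₁ = 0 := le_antisymm (by linarith) h1
      have e2 : l₂ = 0 := le_antisymm (by linarith) h2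
      exact hne (by simp [e1, e2])
    exact base_integral t (l₁ + l₂) hl
  refine ⟨part1, ?_⟩
  congr 1
  -- the single-sum term summability with norms
  have hnorm : ∀ (i : Fin (m + 1)) (s : ℝ), 0 ≤ s →
      Summable fun n => ‖a n * Real.exp (-s * lam n) * c n i‖ := by
    intro i s hs
    apply Summable.of_nonneg_of_le (fun n => norm_nonneg _) _ (habs i)
    intro n
    have he : Real.exp (-s * lam n) ≤ 1 := by
      apply Real.exp_le_one_iff.mpr
      have := hlamnn n
      nlinarith
    have he' : 0 < Real.exp (-s * lam n) := Real.exp_pos _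
    rw [Real.norm_eq_abs, abs_mul, abs_mul, abs_mul]
    rw [abs_of_pos he']
    calc |a n| * Real.exp (-s * lam n) * |c n i|
        ≤ |a n| * 1 * |c n i| := by
          apply mul_le_mul_of_nonneg_right _ (abs_nonneg _)
          exact mul_le_mul_of_nonneg_left he (abs_nonneg _)
      _ = |a n| * |c n i| := by ring
  -- product family (over ℕ × ℕ) summability
  have hprod : ∀ (i : Fin (m + 1)) (s : ℝ), 0 ≤ s →
      Summable fun p : ℕ × ℕ =>
        (a p.1 * Real.exp (-s * lam p.1) * c p.1 i)
          * (a p.2 * Real.exp (-s * lam p.2) * c p.2 i) :=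
    fun i s hs => summable_mul_of_summable_norm (hnorm i s hs) (hnorm i s hs)
  -- squared tsum as double tsum
  have hsq : ∀ (i : Fin (m + 1)) (s : ℝ), 0 ≤ s →
      (∑' n : ℕ, a n * Real.exp (-s * lam n) * c n i) ^ 2
        = ∑' p : ℕ × ℕ, (a p.1 * Real.exp (-s * lam p.1) * c p.1 i)
            * (a p.2 * Real.exp (-s * lam p.2) * c p.2 i) := by
    intro i s hs
    rw [sq]
    exact tsum_mul_tsum_of_summable_norm (hnorm i s hs) (hnorm i s hs)
  set F : ℕ × ℕ → ℝ → ℝ := fun p s => ∑ i, ζ i *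
    ((a p.1 * Real.exp (-s * lam p.1) * c p.1 i)
      * (a p.2 * Real.exp (-s * lam p.2) * c p.2 i)) with hF
  -- integrand equals tsum of F on [0,t]
  have heqOn : ∀ s ∈ Set.uIcc (0:ℝ) t,
      (∑ i, ζ i * (∑' n : ℕ, a n * Real.exp (-s * lam n) * c n i) ^ 2)
        = ∑' p : ℕ × ℕ, F p s := by
    intro s hs
    rw [Set.uIcc_of_le ht.le] at hs
    have hs0 : 0 ≤ s := hs.1
    have : ∀ i : Fin (m + 1), ζ i * (∑' n : ℕ, a n * Real.exp (-s * lam n) * c n i) ^ 2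
        = ∑' p : ℕ × ℕ, ζ i * ((a p.1 * Real.exp (-s * lam p.1) * c p.1 i)
            * (a p.2 * Real.exp (-s * lam p.2) * c p.2 i)) := by
      intro i
      rw [hsq i s hs0, tsum_mul_left]
    simp_rw [this]
    rw [hF]
    exact (Summable.tsum_finsetSum (fun i _ => ((hprod i s hs0).mul_left (ζ i)))).symm
  rw [intervalIntegral.integral_congr heqOn, intervalIntegral.integral_of_le ht.le]
  -- continuity and integrability of each F p
  have hFcont : ∀ p : ℕ × ℕ, Continuous (F p) := by
    intro p
    rw [hF]
    fun_prop
  have hFint : ∀ p : ℕ × ℕ, Integrable (F p) (volume.restrict (Set.Ioc 0 t)) := by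
    intro p
    exact (hFcont p).integrableOn_Ioc
  -- bound family
  set C : ℕ × ℕ → ℝ := fun p => ∑ i, ζ i * (|a p.1 * c p.1 i| * |a p.2 * c p.2 i|) with hC
  have hCsum : Summable C := by
    rw [hC]
    apply summable_sum
    intro i _
    have h1 : Summable fun n => ‖|a n * c n i|‖ := by
      simpa [Real.norm_eq_abs, abs_abs] using habs i
    exact ((summable_mul_of_summable_norm h1 h1).mul_left (ζ i))
  -- pointwise term bound
  have hterm : ∀ (i : Fin (m + 1)) (s : ℝ), 0 ≤ s → ∀ n : ℕ,
      |a n * Real.exp (-s * lam n) * c n i| ≤ |a n * c n i| := by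
    intro i s hs n
    have he : Real.exp (-s * lam n) ≤ 1 := by
      apply Real.exp_le_one_iff.mpr
      have := hlamnn n
      nlinarith
    have he' : 0 < Real.exp (-s * lam n) := Real.exp_pos _
    rw [abs_mul, abs_mul, abs_mul, abs_of_pos he']
    calc |a n| * Real.exp (-s * lam n) * |c n i|
        ≤ |a n| * 1 * |c n i| := by
          apply mul_le_mul_of_nonneg_right _ (abs_nonneg _)
          exact mul_le_mul_of_nonneg_left he (abs_nonneg _)
      _ = |a n| * |c n i| := by ring
  have hFbound : ∀ p : ℕ × ℕ, ∀ s ∈ Set.Ioc (0:ℝ) t, ‖F p s‖ ≤ C p := by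
    intro p s hs
    have hs0 : (0:ℝ) ≤ s := hs.1.le
    rw [hF]
    refine (norm_sum_le _ _).trans ?_
    rw [hC]
    apply Finset.sum_le_sum
    intro i _
    rw [Real.norm_eq_abs, abs_mul, abs_mul, abs_of_nonneg (hζ i)]
    apply mul_le_mul_of_nonneg_left _ (hζ i)
    exact mul_le_mul (hterm i s hs0 p.1) (hterm i s hs0 p.2) (abs_nonneg _)
      (abs_nonneg _)
  have hCnn : ∀ p, 0 ≤ C p := by
    intro p
    rw [hC]
    apply Finset.sum_nonneg
    intro i _
    exact mul_nonneg (hζ i) (mul_nonneg (abs_nonneg _) (abs_nonneg _))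
  have hInt_norm : ∀ p : ℕ × ℕ, (∫ s in Set.Ioc (0:ℝ) t, ‖F p s‖) ≤ t * C p := by
    intro p
    have h1 : (∫ s in Set.Ioc (0:ℝ) t, ‖F p s‖)
        ≤ ∫ _ in Set.Ioc (0:ℝ) t, C p := by
      apply setIntegral_mono_on ((hFint p).norm) ((integrableOn_const_iff (C := C p)).mpr (Or.inr (by
        rw [Real.volume_Ioc]; exact ENNReal.ofReal_lt_top))) measurableSet_Ioc
      exact hFbound p
    refine h1.trans_eq ?_
    rw [setIntegral_const, measureReal_def, Real.volume_Ioc, smul_eq_mul,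
      ENNReal.toReal_ofReal (by linarith)]
    ring_nf
  have hF_sum : Summable fun p : ℕ × ℕ => ∫ s in Set.Ioc (0:ℝ) t, ‖F p s‖ := by
    apply Summable.of_nonneg_of_le (fun p => integral_nonneg fun s => norm_nonneg _)
      hInt_norm (hCsum.mul_left t)
  rw [← integral_tsum_of_summable_integral_norm hFint hF_sum]
  -- compute each integral
  have hlz : ∀ p : ℕ × ℕ, lam p.1 + lam p.2 = 0 ↔ p = (0, 0) := by
    intro p
    constructor
    · intro h
      have h1 : lam p.1 = 0 := by nlinarith [hlamnn p.1, hlamnn p.2]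
      have h2 : lam p.2 = 0 := by nlinarith [hlamnn p.1, hlamnn p.2]
      have e1 : p.1 = 0 := by
        by_contra hne
        exact absurd h1 (hlampos p.1 hne).ne'
      have e2 : p.2 = 0 := by
        by_contra hne
        exact absurd h2 (hlampos p.2 hne).ne'
      exact Prod.ext e1 e2
    · intro h
      rw [h]
      simp [hlam0]
  have hIoc : ∀ l : ℝ, (∫ s in Set.Ioc (0:ℝ) t, Real.exp (-s * l))
      = if l = 0 then t else (1 - Real.exp (-t * l)) / l := by
    intro l
    rw [← intervalIntegral.integral_of_le ht.le]
    by_cases hl : l = 0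
    · simp [hl]
    · rw [if_neg hl]
      exact base_integral t l hl
  set E : Fin (m + 1) → ℕ × ℕ → ℝ := fun i p =>
    if p = (0, 0) then a 0 ^ 2 * c 0 i ^ 2 * t
    else a p.1 * a p.2 * ((1 - Real.exp (-t * (lam p.1 + lam p.2))) / (lam p.1 + lam p.2))
      * c p.1 i * c p.2 i with hE
  have hval : ∀ p : ℕ × ℕ, (∫ s in Set.Ioc (0:ℝ) t, F p s) = ∑ i, ζ i * E i p := by
    intro p
    have hFeq : ∀ s : ℝ, F p s
        = (∑ i, ζ i * ((a p.1 * c p.1 i) * (a p.2 * c p.2 i)))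
            * Real.exp (-s * (lam p.1 + lam p.2)) := by
      intro s
      rw [hF, Finset.sum_mul]
      apply Finset.sum_congr rfl
      intro i _
      have hexp : Real.exp (-s * lam p.1) * Real.exp (-s * lam p.2)
          = Real.exp (-s * (lam p.1 + lam p.2)) := by
        rw [← Real.exp_add]
        ring_nf
      rw [← hexp]
      ring
    simp_rw [hFeq]
    rw [MeasureTheory.integral_const_mul, hIoc]
    by_cases hp : p = (0, 0)
    · rw [if_pos ((hlz p).mpr hp), Finset.sum_mul]
      apply Finset.sum_congr rfl
      intro i _
      rw [hE]
      subst hp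
      simp only [if_pos]
      ring
    · rw [if_neg (fun h => hp ((hlz p).mp h)), Finset.sum_mul]
      apply Finset.sum_congr rfl
      intro i _
      rw [hE]
      simp only [if_neg hp]
      ring
  simp_rw [hval]
  -- summability of E i
  have hEsum : ∀ i : Fin (m + 1), Summable (E i) := by
    intro i
    have hdecomp : E i = fun p : ℕ × ℕ =>
        (a p.1 * a p.2 * ((1 - Real.exp (-t * (lam p.1 + lam p.2))) / (lam p.1 + lam p.2))
          * c p.1 i * c p.2 i)
        + (if p = (0, 0) then a 0 ^ 2 * c 0 i ^ 2 * t else 0) := by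
      funext p
      rw [hE]
      by_cases hp : p = (0, 0)
      · simp only [hp, if_pos]
        have : lam (0:ℕ) + lam (0:ℕ) = 0 := by rw [hlam0]; ring
        simp [this]
      · have hp0 : p ≠ 0 := by simpa [← Prod.mk_zero_zero] using hp
        simp [hp, hp0]
    rw [hdecomp]
    apply (hsum2 i).add
    apply summable_of_ne_finset_zero (s := {((0,0) : ℕ × ℕ)})
    intro p hp
    rw [if_neg (by simpa using hp)]
  -- swap tsum and finite sum
  rw [Summable.tsum_finsetSum (fun i _ => (hEsum i).mul_left (ζ i))]
  apply Finset.sum_congr rfl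
  intro i _
  rw [tsum_mul_left]
  congr 1
  rw [Summable.tsum_eq_add_tsum_ite (hEsum i) ((0,0) : ℕ × ℕ)]
  have h00 : E i ((0,0) : ℕ × ℕ) = a 0 ^ 2 * c 0 i ^ 2 * t := by simp [hE]
  rw [h00]
  congr 1
  apply tsum_congr
  intro p
  by_cases hp : p = (0, 0)
  · have hp0 : p = 0 := by simpa [← Prod.mk_zero_zero] using hp
    simp [hp, hp0]
  · have hp0 : p ≠ 0 := by simpa [← Prod.mk_zero_zero] using hp
    simp [hE, hp, hp0]
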